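/- Let φ be a CNF formula whose variable set is partitioned into V_1, …, V_k, and let I'(φ) = (S', U', E') be the associated set cover instance. Then: (i) φ is satisfiable if and only if there exist s_1 ∈ S_1, …, s_k ∈ S_k such that {s_1, …, s_k} covers U'; and (ii) if φ is unsatisfiable, then every subset of S' covering U' has cardinality greater than k. -/
import Mathlib


/-- The adjacency relation of the set cover instance `I'(φ)` associated with a CNF
formula `φ` whose variables are partitioned into `k` parts via `part`.  The left side is
`S' = Σ i, ({v // part v = i} → Bool)` (assignments to the variables of the `i`-th part);
the universe is `{c // c ∈ φ} ⊕ Fin k` (the clauses of `φ` together with `k` additional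
vertices `u_1, …, u_k`).  An assignment `s ∈ S_i` is adjacent to `u_i`, and is adjacent
to a clause `c` iff some literal of `c` has its variable in the `i`-th part and is made
true by `s`. -/
def cnfAdj {k : ℕ} {V : Type} (part : V → Fin k) (φ : Finset (Finset (V × Bool)))
    (s : Σ i : Fin k, ({v : V // part v = i} → Bool))
    (u : {c // c ∈ φ} ⊕ Fin k) : Prop :=
  Sum.elim
    (fun c : {c // c ∈ φ} =>
      ∃ l ∈ c.val, ∃ hp : part l.1 = s.1, s.2 ⟨l.1, hp⟩ = l.2)
    (fun j : Fin k => s.1 = j) u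

/-- Let `φ` be a CNF formula whose variable set is partitioned into
`V_1, …, V_k`, and let `I'(φ) = (S', U', E')` be the associated set cover instance.  Then:
(i) `φ` is satisfiable iff there exist `s_1 ∈ S_1, …, s_k ∈ S_k` such that
`{s_1, …, s_k}` covers `U'`; and
(ii) if `φ` is unsatisfiable, then every subset of `S'` covering `U'` has cardinality
greater than `k`. -/
theorem cnf_setcover_correct
    (k : ℕ) (hk : 0 < k) (V : Type) (part : V → Fin k)
    (φ : Finset (Finset (V × Bool))) :
    ((∃ α : V → Bool, ∀ c ∈ φ, ∃ l ∈ c, α l.1 = l.2) ↔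
      (∃ s : ∀ i : Fin k, ({v : V // part v = i} → Bool),
        ∀ u : {c // c ∈ φ} ⊕ Fin k, ∃ i : Fin k, cnfAdj part φ ⟨i, s i⟩ u)) ∧
    ((¬ ∃ α : V → Bool, ∀ c ∈ φ, ∃ l ∈ c, α l.1 = l.2) →
      ∀ X : Finset (Σ i : Fin k, ({v : V // part v = i} → Bool)),
        (∀ u : {c // c ∈ φ} ⊕ Fin k, ∃ s ∈ X, cnfAdj part φ s u) →
        k < X.card) := by
  classical
  constructor
  · constructor
    · rintro ⟨α, hα⟩
      refine ⟨fun i v => α v.1, ?_⟩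
      rintro (⟨c, hc⟩ | j)
      · obtain ⟨l, hl, hal⟩ := hα c hc
        exact ⟨part l.1, l, hl, rfl, hal⟩
      · exact ⟨j, rfl⟩
    · rintro ⟨s, hs⟩
      refine ⟨fun v => s (part v) ⟨v, rfl⟩, ?_⟩
      intro c hc
      obtain ⟨i, l, hl, hp, hval⟩ := hs (Sum.inl ⟨c, hc⟩)
      refine ⟨l, hl, ?_⟩
      simp only at hp
      subst hp
      exact hval
  · intro hunsat X hX
    by_contra hlt
    push_neg at hlt
    have hcov : ∀ j : Fin k, ∃ s, ∃ _ : s ∈ X, s.1 = j := by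
      intro j
      obtain ⟨s, hs, hadj⟩ := hX (Sum.inr j)
      exact ⟨s, hs, hadj⟩
    choose f hfX hfj using hcov
    set g : Fin k → {x // x ∈ X} := fun j => ⟨f j, hfX j⟩ with hg
    have hginj : Function.Injective g := by
      intro a b h
      have : f a = f b := congrArg Subtype.val h
      rw [← hfj a, ← hfj b, this]
    have hcard : Fintype.card (Fin k) = Fintype.card {x // x ∈ X} := by
      have h1 : Fintype.card (Fin k) ≤ Fintype.card {x // x ∈ X} :=
        Fintype.card_le_of_injective g hginj
      have h2 : Fintype.card {x // x ∈ X} ≤ Fintype.card (Fin k) := by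
        simpa [Fintype.card_coe] using hlt
      omega
    have hgbij : Function.Bijective g :=
      (Fintype.bijective_iff_injective_and_card g).2 ⟨hginj, hcard⟩
    apply hunsat
    refine ⟨fun v => (f (part v)).2 ⟨v, (hfj (part v)).symm⟩, ?_⟩
    intro c hc
    obtain ⟨x, hx, l, hl, hp, hval⟩ := hX (Sum.inl ⟨c, hc⟩)
    obtain ⟨j, hj⟩ := hgbij.2 ⟨x, hx⟩
    have hfjx : f j = x := congrArg Subtype.val hj
    have hjeq : j = part l.1 := by
      rw [← hfj j, hfjx, ← hp]
    rw [hjeq] at hfjx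
    refine ⟨l, hl, ?_⟩
    subst hfjx
    exact hval
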